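/- arXiv:2010.04555 — 2 statements merged into one kernel-verified Lean document; each statement's English description precedes it below -/
import Mathlib

section
/- Let X : Ω → (Fin n → ℝ) be a random vector on a probability space (Ω, P) with E[X_i] = 0 for all i and E[X_i · X_j] = σ² if i = j and 0 otherwise, where σ ≠ 0. Let W be an n × m real matrix with m > n such that every column of W is nonzero, let b ∈ Fin m → ℝ, and define Y_j = (Σ_i X_i · W i j) + b_j. Then there exist indices i ≠ j with Cov(Y_i, Y_j) ≠ 0. -/
open MeasureTheory Matrix

/-- Corollary 1 of the paper: if `X` is centered with covariance `σ² • I` (`σ ≠ 0`)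
and the layer `Y j = ∑ i, X i * W i j + b j` is wider than the input (`m > n`) with all
columns of `W` nonzero, then some pair of distinct coordinates of `Y` is correlated. -/
theorem stmt_3 {Ω : Type*} [MeasurableSpace Ω] (P : Measure Ω) [IsProbabilityMeasure P]
    {n m : ℕ} (X : Ω → (Fin n → ℝ)) (hXmeas : Measurable X)
    (hXL2 : ∀ i, MemLp (fun ω => X ω i) 2 P)
    (σ : ℝ) (hσ : σ ≠ 0)
    (hmean : ∀ i, ∫ ω, X ω i ∂P = 0)
    (hcov : ∀ i j, ∫ ω, X ω i * X ω j ∂P = if i = j then σ ^ 2 else 0)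
    (W : Matrix (Fin n) (Fin m) ℝ) (hnm : m > n)
    (hcols : ∀ j, (fun i => W i j) ≠ 0)
    (b : Fin m → ℝ)
    (Y : Ω → (Fin m → ℝ))
    (hY : ∀ ω j, Y ω j = (∑ i, X ω i * W i j) + b j) :
    ∃ i j, i ≠ j ∧
      ∫ ω, (Y ω i - ∫ ω', Y ω' i ∂P) * (Y ω j - ∫ ω', Y ω' j ∂P) ∂P ≠ 0 := by
  -- integrability facts
  have hXint : ∀ k, Integrable (fun ω => X ω k) P := fun k =>
    (hXL2 k).integrable (by norm_num)
  have hmul : ∀ k l, Integrable (fun ω => X ω k * X ω l) P := by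
    intro k l
    have := ((hXL2 l).smul (hXL2 k) (r := 1) : MemLp (fun ω => X ω k • X ω l) 1 P)
    exact memLp_one_iff_integrable.mp this
  -- mean of Y
  have hmeanY : ∀ j, ∫ ω, Y ω j ∂P = b j := by
    intro j
    have : ∫ ω, Y ω j ∂P = ∫ ω, (∑ i, X ω i * W i j) + b j ∂P := by
      refine integral_congr_ae (Filter.Eventually.of_forall fun ω => ?_)
      exact hY ω j
    rw [this, integral_add (by
        exact integrable_finset_sum _ fun i _ => (hXint i).mul_const _)
      (integrable_const _)]
    rw [integral_finset_sum _ fun i _ => (hXint i).mul_const _]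
    simp [integral_mul_const, hmean]
  -- covariance formula
  have hcovY : ∀ i j, ∫ ω, (Y ω i - ∫ ω', Y ω' i ∂P) * (Y ω j - ∫ ω', Y ω' j ∂P) ∂P
      = σ ^ 2 * ∑ k, W k i * W k j := by
    intro i j
    have hint : ∀ ω, (Y ω i - ∫ ω', Y ω' i ∂P) * (Y ω j - ∫ ω', Y ω' j ∂P)
        = ∑ k, ∑ l, (X ω k * X ω l) * (W k i * W l j) := by
      intro ω
      rw [hmeanY, hmeanY, hY, hY]
      rw [add_sub_cancel_right, add_sub_cancel_right, Finset.sum_mul_sum]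
      apply Finset.sum_congr rfl; intro k _
      apply Finset.sum_congr rfl; intro l _
      ring
    calc ∫ ω, (Y ω i - ∫ ω', Y ω' i ∂P) * (Y ω j - ∫ ω', Y ω' j ∂P) ∂P
        = ∫ ω, ∑ k, ∑ l, (X ω k * X ω l) * (W k i * W l j) ∂P := by
          exact integral_congr_ae (Filter.Eventually.of_forall hint)
      _ = ∑ k, ∑ l, (∫ ω, X ω k * X ω l ∂P) * (W k i * W l j) := by
          rw [integral_finset_sum _ fun k _ => integrable_finset_sum _
            fun l _ => (hmul k l).mul_const _]
          exact Finset.sum_congr rfl fun k _ => by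
            rw [integral_finset_sum _ fun l _ => (hmul k l).mul_const _]
            exact Finset.sum_congr rfl fun l _ => integral_mul_const _ _
      _ = σ ^ 2 * ∑ k, W k i * W k j := by
          rw [Finset.mul_sum]
          refine Finset.sum_congr rfl fun k _ => ?_
          rw [Finset.sum_eq_single k]
          · rw [hcov]; simp
          · intro l _ hl; rw [hcov]; simp [Ne.symm hl]
          · simp
  -- contradiction argument
  by_contra h
  push_neg at h
  have horth : ∀ i j : Fin m, i ≠ j → ∑ k, W k i * W k j = 0 := by
    intro i j hij
    have := h i j hij
    rw [hcovY] at this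
    have hσ2 : σ ^ 2 ≠ 0 := pow_ne_zero _ hσ
    exact (mul_eq_zero.mp this).resolve_left hσ2
  -- columns of W as vectors in Euclidean space
  set v : Fin m → EuclideanSpace ℝ (Fin n) := fun j => WithLp.toLp 2 (fun k => W k j) with hv
  have hvz : ∀ j, v j ≠ 0 := by
    intro j hj
    exact hcols j (by funext k; exact congrArg (fun x => x k) hj)
  have hvo : Pairwise fun i j => (inner ℝ (v i) (v j) : ℝ) = 0 := by
    intro i j hij
    rw [PiLp.inner_apply]
    simpa [RCLike.inner_apply, mul_comm] using horth i j hij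
  have hli : LinearIndependent ℝ v := linearIndependent_of_ne_zero_of_inner_eq_zero hvz hvo
  have hcard := hli.fintype_card_le_finrank
  simp [finrank_euclideanSpace_fin] at hcard
  omega
end

section
/- Under the hypotheses of Statement 2 — r_i, r_j : Ω → ℝ are {0,1}-valued with P(r_i = 1) = P(r_j = 1) = p ∈ (0, 1], independent of each other and of the pair (φ_i, φ_j), where E[φ_i] = E[φ_j] = 0 and E[φ_i²] = E[φ_j²] = γ² > 0 — the absolute correlation after dropout satisfies |E[(r_iφ_i)(r_jφ_j)]| / sqrt(E[(r_iφ_i)²] E[(r_jφ_j)²]) ≤ |E[φ_i φ_j]| / γ², with strict inequality whenever p < 1 and E[φ_i φ_j] ≠ 0. -/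
open MeasureTheory ProbabilityTheory

lemma bern_integral {Ω : Type*} [MeasurableSpace Ω] (P : Measure Ω) [IsProbabilityMeasure P]
    (p : ℝ) (hp0 : 0 < p) (r : Ω → ℝ) (hr : Measurable r)
    (hr01 : ∀ ω, r ω = 0 ∨ r ω = 1) (hrP : P {ω | r ω = 1} = ENNReal.ofReal p) :
    ∫ ω, r ω ∂P = p := by
  have hs : MeasurableSet {ω | r ω = 1} := hr (measurableSet_singleton 1)
  have hind : (fun ω => r ω) = Set.indicator {ω | r ω = 1} (fun _ => (1:ℝ)) := by
    funext ω
    rcases hr01 ω with h | h <;> simp [Set.indicator, h]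
  rw [hind, integral_indicator_const _ hs, measureReal_def, hrP, ENNReal.toReal_ofReal hp0.le]
  simp

/-- Corollary of Statement 2 of the paper: dropout never increases the magnitude of the
correlation between two centered neurons, and strictly decreases it when `p < 1` and the
neurons are correlated. -/
theorem stmt_8 {Ω : Type*} [MeasurableSpace Ω] (P : Measure Ω) [IsProbabilityMeasure P]
    (p : ℝ) (hp0 : 0 < p) (hp1 : p ≤ 1)
    (ri rj : Ω → ℝ) (hri : Measurable ri) (hrj : Measurable rj)
    (hri01 : ∀ ω, ri ω = 0 ∨ ri ω = 1) (hrj01 : ∀ ω, rj ω = 0 ∨ rj ω = 1)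
    (hriP : P {ω | ri ω = 1} = ENNReal.ofReal p)
    (hrjP : P {ω | rj ω = 1} = ENNReal.ofReal p)
    (φi φj : Ω → ℝ) (hφi : MemLp φi 2 P) (hφj : MemLp φj 2 P)
    (hmi : ∫ ω, φi ω ∂P = 0) (hmj : ∫ ω, φj ω ∂P = 0)
    (γ2 : ℝ) (hγ2 : 0 < γ2)
    (hvi : ∫ ω, φi ω ^ 2 ∂P = γ2) (hvj : ∫ ω, φj ω ^ 2 ∂P = γ2)
    (hindep_r : IndepFun ri rj P)
    (hindep : IndepFun (fun ω => (ri ω, rj ω)) (fun ω => (φi ω, φj ω)) P) :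
    (|∫ ω, (ri ω * φi ω) * (rj ω * φj ω) ∂P| /
        Real.sqrt ((∫ ω, (ri ω * φi ω) ^ 2 ∂P) * (∫ ω, (rj ω * φj ω) ^ 2 ∂P))
      ≤ |∫ ω, φi ω * φj ω ∂P| / γ2) ∧
    (p < 1 → (∫ ω, φi ω * φj ω ∂P) ≠ 0 →
      |∫ ω, (ri ω * φi ω) * (rj ω * φj ω) ∂P| /
          Real.sqrt ((∫ ω, (ri ω * φi ω) ^ 2 ∂P) * (∫ ω, (rj ω * φj ω) ^ 2 ∂P))
        < |∫ ω, φi ω * φj ω ∂P| / γ2) := by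
  have hφim : AEStronglyMeasurable φi P := hφi.aestronglyMeasurable
  have hφjm : AEStronglyMeasurable φj P := hφj.aestronglyMeasurable
  have hEri : ∫ ω, ri ω ∂P = p := bern_integral P p hp0 ri hri hri01 hriP
  have hErj : ∫ ω, rj ω ∂P = p := bern_integral P p hp0 rj hrj hrj01 hrjP
  -- independence of ri*rj and φi*φj
  have hmul : Measurable (fun q : ℝ × ℝ => q.1 * q.2) := measurable_fst.mul measurable_snd
  have hI1 : IndepFun (fun ω => ri ω * rj ω) (fun ω => φi ω * φj ω) P :=
    hindep.comp hmul hmul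
  have hIsq_i : IndepFun (fun ω => ri ω) (fun ω => φi ω ^ 2) P :=
    hindep.comp measurable_fst (measurable_fst.pow_const 2)
  have hIsq_j : IndepFun (fun ω => rj ω) (fun ω => φj ω ^ 2) P :=
    hindep.comp measurable_snd (measurable_snd.pow_const 2)
  -- key integrals
  have hErr : ∫ ω, ri ω * rj ω ∂P = p * p := by
    have := hindep_r.integral_mul_eq_mul_integral hri.aestronglyMeasurable hrj.aestronglyMeasurable
    simpa [Pi.mul_apply, hEri, hErj] using this
  have hnum : ∫ ω, (ri ω * φi ω) * (rj ω * φj ω) ∂P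
      = p * p * ∫ ω, φi ω * φj ω ∂P := by
    have h1 : (fun ω => (ri ω * φi ω) * (rj ω * φj ω))
        = (fun ω => ri ω * rj ω) * (fun ω => φi ω * φj ω) := by
      funext ω; simp [Pi.mul_apply]; ring
    have h2 := hI1.integral_mul_eq_mul_integral ((hri.mul hrj).aestronglyMeasurable) (hφim.mul hφjm)
    calc ∫ ω, (ri ω * φi ω) * (rj ω * φj ω) ∂P
        = ∫ ω, ((fun ω => ri ω * rj ω) * (fun ω => φi ω * φj ω)) ω ∂P := by
          refine integral_congr_ae (Filter.Eventually.of_forall fun ω => ?_)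
          simp [Pi.mul_apply]; ring
      _ = (∫ ω, ri ω * rj ω ∂P) * ∫ ω, φi ω * φj ω ∂P := h2
      _ = p * p * ∫ ω, φi ω * φj ω ∂P := by rw [hErr]
  have hden_i : ∫ ω, (ri ω * φi ω) ^ 2 ∂P = p * γ2 := by
    have h2 := hIsq_i.integral_mul_eq_mul_integral hri.aestronglyMeasurable (hφim.pow 2)
    calc ∫ ω, (ri ω * φi ω) ^ 2 ∂P
        = ∫ ω, ((fun ω => ri ω) * (fun ω => φi ω ^ 2)) ω ∂P := by
          refine integral_congr_ae (Filter.Eventually.of_forall fun ω => ?_)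
          rcases hri01 ω with h | h <;> simp [Pi.mul_apply, h, mul_pow]
      _ = (∫ ω, ri ω ∂P) * ∫ ω, φi ω ^ 2 ∂P := h2
      _ = p * γ2 := by rw [hEri, hvi]
  have hden_j : ∫ ω, (rj ω * φj ω) ^ 2 ∂P = p * γ2 := by
    have h2 := hIsq_j.integral_mul_eq_mul_integral hrj.aestronglyMeasurable (hφjm.pow 2)
    calc ∫ ω, (rj ω * φj ω) ^ 2 ∂P
        = ∫ ω, ((fun ω => rj ω) * (fun ω => φj ω ^ 2)) ω ∂P := by
          refine integral_congr_ae (Filter.Eventually.of_forall fun ω => ?_)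
          rcases hrj01 ω with h | h <;> simp [Pi.mul_apply, h, mul_pow]
      _ = (∫ ω, rj ω ∂P) * ∫ ω, φj ω ^ 2 ∂P := h2
      _ = p * γ2 := by rw [hErj, hvj]
  set c := ∫ ω, φi ω * φj ω ∂P with hc
  have hpγ : 0 < p * γ2 := mul_pos hp0 hγ2
  have hsqrt : Real.sqrt ((p * γ2) * (p * γ2)) = p * γ2 := Real.sqrt_mul_self hpγ.le
  have hLHS : |∫ ω, (ri ω * φi ω) * (rj ω * φj ω) ∂P| /
      Real.sqrt ((∫ ω, (ri ω * φi ω) ^ 2 ∂P) * (∫ ω, (rj ω * φj ω) ^ 2 ∂P))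
      = p * |c| / γ2 := by
    rw [hnum, hden_i, hden_j, hsqrt, abs_mul, abs_of_pos (mul_pos hp0 hp0)]
    field_simp
  rw [hLHS]
  constructor
  · refine (div_le_div_iff_of_pos_right hγ2).mpr ?_
    nlinarith [abs_nonneg c]
  · intro hplt hcne
    refine (div_lt_div_iff_of_pos_right hγ2).mpr ?_
    nlinarith [abs_pos.mpr hcne]
end
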